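/- Let N ∈ ℕ, let (c₁,…,c_N, σ) ∈ ℝ₊^{N+1} with c₁ > 0 and σ > 0, let s(x) = c₁x₁ / (∑_{n=1}^N cₙxₙ + σ), and let f : ℝ₊₊^N → ℝ₊₊ be f(x) = x₁ / log(1 + s(x)). Then f admits a continuous extension f̄ : ℝ₊^N → ℝ₊ to the closed nonnegative cone, this extension f̄ is a concave function, and it satisfies f̄(x) ≥ f̄(0) = σ/c₁ > 0 for every x ∈ ℝ₊^N. -/

import Mathlib

open intervalIntegral in
lemma int_exp_lin {A B : ℝ} (hA : 0 < A) (hB : 0 < B) (hne : A ≠ B) :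
    ∫ s in (0:ℝ)..1, Real.exp (s * Real.log A + (1 - s) * Real.log B)
      = (A - B) / (Real.log A - Real.log B) := by
  have hk : Real.log A - Real.log B ≠ 0 := by
    intro h
    apply hne
    have hlog : Real.log A = Real.log B := by linarith [sub_eq_zero.mp h]
    calc A = Real.exp (Real.log A) := (Real.exp_log hA).symm
    _ = Real.exp (Real.log B) := by rw [hlog]
    _ = B := Real.exp_log hB
  set k := Real.log A - Real.log B with hkdef
  have h1 : ∀ s : ℝ, Real.exp (s * Real.log A + (1 - s) * Real.log B)
      = B * Real.exp (k * s) := by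
    intro s
    rw [show s * Real.log A + (1 - s) * Real.log B = Real.log B + k * s by
      rw [hkdef]; ring, Real.exp_add, Real.exp_log hB]
  simp only [h1]
  rw [intervalIntegral.integral_const_mul,
    intervalIntegral.integral_comp_mul_left (fun x => Real.exp x) hk,
    mul_zero, mul_one, integral_exp]
  have hek : Real.exp k = A / B := by
    rw [hkdef, Real.exp_sub, Real.exp_log hA, Real.exp_log hB]
  rw [hek, smul_eq_mul, Real.exp_zero]
  field_simp

lemma pos_mix {p q A₁ A₂ : ℝ} (hp : 0 ≤ p) (hq : 0 ≤ q) (hpq : p + q = 1)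
    (hA₁ : 0 < A₁) (hA₂ : 0 < A₂) : 0 < p * A₁ + q * A₂ := by
  rcases eq_or_lt_of_le hp with h | h
  · have hq1 : q = 1 := by linarith
    rw [← h, hq1]; simpa using hA₂
  · nlinarith [mul_nonneg hq hA₂.le]

lemma geom_mix {s p q A₁ B₁ A₂ B₂ : ℝ} (hs0 : 0 ≤ s) (hs1 : s ≤ 1)
    (hA₁ : 0 < A₁) (hB₁ : 0 < B₁) (hA₂ : 0 < A₂) (hB₂ : 0 < B₂)
    (hp : 0 ≤ p) (hq : 0 ≤ q) (hpq : p + q = 1) :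
    p * Real.exp (s * Real.log A₁ + (1 - s) * Real.log B₁)
      + q * Real.exp (s * Real.log A₂ + (1 - s) * Real.log B₂)
      ≤ Real.exp (s * Real.log (p * A₁ + q * A₂) + (1 - s) * Real.log (p * B₁ + q * B₂)) := by
  have hA : 0 < p * A₁ + q * A₂ := pos_mix hp hq hpq hA₁ hA₂
  have hB : 0 < p * B₁ + q * B₂ := pos_mix hp hq hpq hB₁ hB₂
  have exp_eq : ∀ {X Y : ℝ}, 0 < X → 0 < Y →
      Real.exp (s * Real.log X + (1 - s) * Real.log Y) = X ^ s * Y ^ (1 - s) := by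
    intro X Y hX hY
    rw [Real.exp_add, Real.rpow_def_of_pos hX, Real.rpow_def_of_pos hY, mul_comm (Real.log X) s,
      mul_comm (Real.log Y) (1 - s)]
  rw [exp_eq hA₁ hB₁, exp_eq hA₂ hB₂, exp_eq hA hB]
  set A := p * A₁ + q * A₂ with hAdef
  set B := p * B₁ + q * B₂ with hBdef
  set C := A ^ s * B ^ (1 - s) with hCdef
  have hCpos : 0 < C := mul_pos (Real.rpow_pos_of_pos hA s) (Real.rpow_pos_of_pos hB (1 - s))
  have key : ∀ {X Y : ℝ}, 0 < X → 0 < Y →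
      X ^ s * Y ^ (1 - s) ≤ C * (s * (X / A) + (1 - s) * (Y / B)) := by
    intro X Y hX hY
    have amgm := Real.geom_mean_le_arith_mean2_weighted (w₁ := s) (w₂ := 1 - s)
      (p₁ := X / A) (p₂ := Y / B) hs0 (by linarith)
      (div_nonneg hX.le hA.le) (div_nonneg hY.le hB.le) (by ring)
    rw [Real.div_rpow hX.le hA.le, Real.div_rpow hY.le hB.le] at amgm
    have hAs : (0:ℝ) < A ^ s := Real.rpow_pos_of_pos hA s
    have hBs : (0:ℝ) < B ^ (1 - s) := Real.rpow_pos_of_pos hB (1 - s)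
    calc X ^ s * Y ^ (1 - s)
        = C * (X ^ s / A ^ s * (Y ^ (1 - s) / B ^ (1 - s))) := by
          rw [hCdef]; field_simp
    _ ≤ C * (s * (X / A) + (1 - s) * (Y / B)) :=
          mul_le_mul_of_nonneg_left amgm hCpos.le
  have eA : p * (A₁ / A) + q * (A₂ / A) = 1 := by
    rw [← mul_div_assoc, ← mul_div_assoc, ← add_div, ← hAdef, div_self hA.ne']
  have eB : p * (B₁ / B) + q * (B₂ / B) = 1 := by
    rw [← mul_div_assoc, ← mul_div_assoc, ← add_div, ← hBdef, div_self hB.ne']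
  calc p * (A₁ ^ s * B₁ ^ (1 - s)) + q * (A₂ ^ s * B₂ ^ (1 - s))
      ≤ p * (C * (s * (A₁ / A) + (1 - s) * (B₁ / B)))
        + q * (C * (s * (A₂ / A) + (1 - s) * (B₂ / B))) :=
        add_le_add (mul_le_mul_of_nonneg_left (key hA₁ hB₁) hp)
          (mul_le_mul_of_nonneg_left (key hA₂ hB₂) hq)
  _ = C := by linear_combination (C * s) * eA + (C * (1 - s)) * eB

/-- Fact 1 (extension part): the function `f(x) = x₁ / log(1 + s(x))`, with
`s(x) = c₁ x₁ / (∑ₙ cₙ xₙ + σ)`, admits a continuous extension `f̄` to the closed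
nonnegative cone `ℝ₊^N`; this extension is concave and satisfies
`f̄(x) ≥ f̄(0) = σ / c₁ > 0` for every `x ∈ ℝ₊^N`. -/
theorem stmt1 (N : ℕ) (hN : 0 < N) (c : Fin N → ℝ) (σ : ℝ)
    (hc : ∀ n, 0 ≤ c n) (hc1 : 0 < c ⟨0, hN⟩) (hσ : 0 < σ) :
    ∃ fbar : (Fin N → ℝ) → ℝ,
      ContinuousOn fbar {x : Fin N → ℝ | ∀ i, 0 ≤ x i} ∧
      (∀ x : Fin N → ℝ, (∀ i, 0 < x i) →
        fbar x =
          x ⟨0, hN⟩ /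
            Real.log (1 + c ⟨0, hN⟩ * x ⟨0, hN⟩ / (∑ n, c n * x n + σ))) ∧
      ConcaveOn ℝ {x : Fin N → ℝ | ∀ i, 0 ≤ x i} fbar ∧
      fbar 0 = σ / c ⟨0, hN⟩ ∧ 0 < fbar 0 ∧
      (∀ x : Fin N → ℝ, (∀ i, 0 ≤ x i) → fbar 0 ≤ fbar x) := by
  classical
  set c1 := c ⟨0, hN⟩ with hc1def
  set b : (Fin N → ℝ) → ℝ := fun x => ∑ n, c n * x n + σ with hbdef
  set a : (Fin N → ℝ) → ℝ := fun x => b x + c1 * x ⟨0, hN⟩ with hadef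
  set A : (Fin N → ℝ) → ℝ := fun x => max (a x) (σ / 2) with hAdef
  set B : (Fin N → ℝ) → ℝ := fun x => max (b x) (σ / 2) with hBdef
  set F : (Fin N → ℝ) → ℝ → ℝ := fun x s =>
    Real.exp (s * Real.log (A x) + (1 - s) * Real.log (B x)) with hFdef
  set I : (Fin N → ℝ) → ℝ := fun x => ∫ s in (0:ℝ)..1, F x s with hIdef
  -- positivity
  have hm : (0:ℝ) < σ / 2 := by linarith
  have hApos : ∀ x, 0 < A x := fun x => lt_of_lt_of_le hm (le_max_right _ _)
  have hBpos : ∀ x, 0 < B x := fun x => lt_of_lt_of_le hm (le_max_right _ _)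
  -- continuity of I
  have hbc : Continuous b := by
    apply Continuous.add _ continuous_const
    exact continuous_finset_sum _ fun n _ => continuous_const.mul (continuous_apply n)
  have hac : Continuous a := hbc.add (continuous_const.mul (continuous_apply _))
  have hAc : Continuous A := hac.max continuous_const
  have hBc : Continuous B := hbc.max continuous_const
  have hFc : Continuous (Function.uncurry F) := by
    apply Real.continuous_exp.comp
    apply Continuous.add
    · exact continuous_snd.mul ((hAc.comp continuous_fst).log fun p => (hApos p.1).ne')
    · exact (continuous_const.sub continuous_snd).mul
        ((hBc.comp continuous_fst).log fun p => (hBpos p.1).ne')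
  have hIc : Continuous I :=
    intervalIntegral.continuous_parametric_intervalIntegral_of_continuous' hFc 0 1
  have hFint : ∀ x, IntervalIntegrable (F x) MeasureTheory.volume 0 1 := fun x =>
    (hFc.comp (Continuous.prodMk_right x)).intervalIntegrable 0 1
  -- cone facts
  have hconeb : ∀ x : Fin N → ℝ, (∀ i, 0 ≤ x i) → σ ≤ b x := by
    intro x hx
    have h0 : 0 ≤ ∑ n, c n * x n :=
      Finset.sum_nonneg fun n _ => mul_nonneg (hc n) (hx n)
    simp only [hbdef]
    linarith
  have hconea : ∀ x : Fin N → ℝ, (∀ i, 0 ≤ x i) → σ ≤ a x := by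
    intro x hx
    have h0 : 0 ≤ c1 * x ⟨0, hN⟩ := mul_nonneg hc1.le (hx _)
    have := hconeb x hx
    simp only [hadef]
    linarith
  have hBeq : ∀ x : Fin N → ℝ, (∀ i, 0 ≤ x i) → B x = b x := by
    intro x hx
    exact max_eq_left (le_trans (by linarith : σ / 2 ≤ σ) (hconeb x hx))
  have hAeq : ∀ x : Fin N → ℝ, (∀ i, 0 ≤ x i) → A x = a x := by
    intro x hx
    exact max_eq_left (le_trans (by linarith : σ / 2 ≤ σ) (hconea x hx))
  -- value at 0
  have hb0 : b 0 = σ := by simp [hbdef]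
  have ha0 : a 0 = σ := by simp [hadef, hb0]
  have hF0 : ∀ s : ℝ, F 0 s = σ := by
    intro s
    simp only [hFdef, hAdef, hBdef, hb0, ha0, max_eq_left (by linarith : σ / 2 ≤ σ)]
    rw [show s * Real.log σ + (1 - s) * Real.log σ = Real.log σ by ring, Real.exp_log hσ]
  have hI0 : I 0 = σ := by
    simp only [hIdef, hF0, intervalIntegral.integral_const, smul_eq_mul, sub_zero, one_mul]
  -- lower bound for I on the cone
  have hIlow : ∀ x : Fin N → ℝ, (∀ i, 0 ≤ x i) → σ ≤ I x := by
    intro x hx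
    have hpt : ∀ s ∈ Set.Icc (0:ℝ) 1, (fun _ : ℝ => σ) s ≤ F x s := by
      intro s hs
      have hlA : Real.log σ ≤ Real.log (A x) :=
        Real.log_le_log hσ (le_trans (hconea x hx) (le_max_left _ _))
      have hlB : Real.log σ ≤ Real.log (B x) :=
        Real.log_le_log hσ (le_trans (hconeb x hx) (le_max_left _ _))
      have : Real.log σ ≤ s * Real.log (A x) + (1 - s) * Real.log (B x) := by
        nlinarith [hs.1, hs.2, mul_le_mul_of_nonneg_left hlA hs.1,
          mul_le_mul_of_nonneg_left hlB (by linarith [hs.2] : (0:ℝ) ≤ 1 - s)]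
      calc σ = Real.exp (Real.log σ) := (Real.exp_log hσ).symm
      _ ≤ F x s := by simpa only [hFdef] using Real.exp_le_exp.mpr this
    have := intervalIntegral.integral_mono_on zero_le_one
      (intervalIntegrable_const) (hFint x) hpt
    simpa using this
  refine ⟨fun x => I x / c1, ?_, ?_, ?_, ?_, ?_, ?_⟩
  · exact (hIc.div_const c1).continuousOn
  · -- formula on the open cone
    intro x hx
    have hx0 : ∀ i, 0 ≤ x i := fun i => (hx i).le
    have hbpos : 0 < b x := lt_of_lt_of_le hσ (hconeb x hx0)
    have hba : b x < a x := by
      have : 0 < c1 * x ⟨0, hN⟩ := mul_pos hc1 (hx _)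
      simp only [hadef]
      linarith
    have hapos : 0 < a x := hbpos.trans hba
    have hIx : I x = (a x - b x) / (Real.log (a x) - Real.log (b x)) := by
      have h1 : σ / 2 ≤ a x := le_trans (by linarith : σ / 2 ≤ σ) (hconea x hx0)
      have h2 : σ / 2 ≤ b x := le_trans (by linarith : σ / 2 ≤ σ) (hconeb x hx0)
      simp only [hIdef, hFdef, hAdef, hBdef, max_eq_left h1, max_eq_left h2]
      exact int_exp_lin hapos hbpos hba.ne'
    have hdiff : a x - b x = c1 * x ⟨0, hN⟩ := by simp only [hadef]; ring
    have hlogd : Real.log (a x) - Real.log (b x)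
        = Real.log (1 + c1 * x ⟨0, hN⟩ / b x) := by
      rw [← Real.log_div hapos.ne' hbpos.ne']
      congr 1
      rw [hadef]
      field_simp
    have hLpos : 0 < Real.log (a x) - Real.log (b x) := by
      have := Real.log_lt_log hbpos hba
      linarith
    have hbx : ∑ n, c n * x n + σ = b x := rfl
    show I x / c1 = x ⟨0, hN⟩ / Real.log (1 + c1 * x ⟨0, hN⟩ / (∑ n, c n * x n + σ))
    rw [hbx, hIx, hdiff, hlogd]
    rw [← hlogd]
    field_simp
  · -- concavity
    constructor
    · intro x hx y hy p q hp hq hpq i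
      have hzi : (p • x + q • y) i = p * x i + q * y i := by
        simp [smul_eq_mul]
      show 0 ≤ (p • x + q • y) i
      rw [hzi]
      exact add_nonneg (mul_nonneg hp (hx i)) (mul_nonneg hq (hy i))
    · intro x hx y hy p q hp hq hpq
      show p • (I x / c1) + q • (I y / c1) ≤ I (p • x + q • y) / c1
      simp only [smul_eq_mul]
      set z := p • x + q • y with hzdef
      have hzi : ∀ i, z i = p * x i + q * y i := fun i => by
        simp [hzdef, smul_eq_mul]
      have hz : ∀ i, 0 ≤ z i := fun i => by
        rw [hzi i]
        exact add_nonneg (mul_nonneg hp (hx i)) (mul_nonneg hq (hy i))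
      have hsum : ∑ n, c n * z n = p * (∑ n, c n * x n) + q * (∑ n, c n * y n) := by
        rw [Finset.mul_sum, Finset.mul_sum, ← Finset.sum_add_distrib]
        exact Finset.sum_congr rfl fun n _ => by rw [hzi n]; ring
      have hbz : b z = p * b x + q * b y := by
        simp only [hbdef]
        rw [hsum]
        linear_combination (-σ) * hpq
      have haz : a z = p * a x + q * a y := by
        simp only [hadef]
        rw [hbz, hzi ⟨0, hN⟩]
        simp only [hbdef]
        ring
      have hax : 0 < a x := lt_of_lt_of_le hσ (hconea x hx)
      have hay : 0 < a y := lt_of_lt_of_le hσ (hconea y hy)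
      have hbx : 0 < b x := lt_of_lt_of_le hσ (hconeb x hx)
      have hby : 0 < b y := lt_of_lt_of_le hσ (hconeb y hy)
      have hpt : ∀ s ∈ Set.Icc (0:ℝ) 1, p * F x s + q * F y s ≤ F z s := by
        intro s hs
        simp only [hFdef, hAeq x hx, hBeq x hx, hAeq y hy, hBeq y hy,
          hAeq z hz, hBeq z hz, haz, hbz]
        exact geom_mix hs.1 hs.2 hax hbx hay hby hp hq hpq
      have hmono := intervalIntegral.integral_mono_on zero_le_one
        (((hFint x).const_mul p).add ((hFint y).const_mul q)) (hFint z) hpt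
      have hsplit : (∫ s in (0:ℝ)..1, (p * F x s + q * F y s))
          = p * I x + q * I y := by
        rw [intervalIntegral.integral_add ((hFint x).const_mul p) ((hFint y).const_mul q),
          intervalIntegral.integral_const_mul, intervalIntegral.integral_const_mul]
      rw [hsplit] at hmono
      have hIz : (∫ s in (0:ℝ)..1, F z s) = I z := rfl
      rw [hIz] at hmono
      have hre : p * (I x / c1) + q * (I y / c1) = (p * I x + q * I y) / c1 := by
        ring
      rw [hre]
      gcongr
  · show I 0 / c1 = σ / c1
    rw [hI0]
  · show 0 < I 0 / c1
    rw [hI0]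
    positivity
  · intro x hx
    show I 0 / c1 ≤ I x / c1
    rw [hI0]
    have := hIlow x hx
    gcongr
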